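/- Let j ≥ 1/2 be a half-integer, d = 2j+1, and let p : {0,1,...,2j} → [0,1] be a probability distribution (∑_L p_L = 1). Define u := (d²·∑_L p_L²/(2L+1) − 1)/(d²−1) and Δ := (∑_L p_L·L(L+1))²/(8j(j+1)²). Then √Δ ≥ (√2·j^{1/2}/(2j+1)²)·(1−u). -/

import Mathlib

theorem stmt_4 (n : ℕ) (hn : 1 ≤ n) (j : ℝ) (hj : j = n / 2)
    (p : ℕ → ℝ) (hp0 : ∀ L, 0 ≤ p L) (hp1 : ∀ L, p L ≤ 1)
    (hsum : ∑ L ∈ Finset.range (n + 1), p L = 1)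
    (d : ℝ) (hd : d = 2 * j + 1)
    (u : ℝ) (hu : u = (d ^ 2 * ∑ L ∈ Finset.range (n + 1), p L ^ 2 / (2 * L + 1) - 1) / (d ^ 2 - 1))
    (Δ : ℝ) (hΔ : Δ = (∑ L ∈ Finset.range (n + 1), p L * (L * (L + 1))) ^ 2 / (8 * j * (j + 1) ^ 2)) :
    Real.sqrt Δ ≥ (Real.sqrt 2 * Real.sqrt j) / (2 * j + 1) ^ 2 * (1 - u) := by
  have hn1 : (1:ℝ) ≤ (n:ℝ) := by exact_mod_cast hn
  have hj0 : 0 < j := by rw [hj]; linarith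
  set S : ℝ := ∑ L ∈ Finset.range (n + 1), p L * (L * (L + 1)) with hS
  set Q : ℝ := ∑ L ∈ Finset.range (n + 1), p L ^ 2 / (2 * L + 1) with hQ
  have hS0 : 0 ≤ S := by
    apply Finset.sum_nonneg
    intro i _
    exact mul_nonneg (hp0 i) (by positivity)
  have hQ0 : p 0 ^ 2 ≤ Q := by
    have := Finset.single_le_sum (f := fun L => p L ^ 2 / (2 * (L:ℝ) + 1))
      (fun i _ => by positivity) (Finset.mem_range.mpr (Nat.succ_pos n))
    simpa using this
  have h2T : 2 - 2 * p 0 ≤ S := by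
    have h1 : ∑ L ∈ Finset.range (n+1), (if L = 0 then 0 else 2 * p L) ≤ S := by
      apply Finset.sum_le_sum
      intro i _
      by_cases h : i = 0
      · subst h; simp
      · simp only [h, if_false]
        have hi : 1 ≤ i := Nat.one_le_iff_ne_zero.mpr h
        have hi' : (1:ℝ) ≤ (i:ℝ) := by exact_mod_cast hi
        have h2i : (2:ℝ) ≤ (i:ℝ) * ((i:ℝ)+1) := by nlinarith
        nlinarith [mul_le_mul_of_nonneg_right h2i (hp0 i)]
    have h2 : ∑ L ∈ Finset.range (n+1), (if L = 0 then 0 else 2 * p L) = 2 - 2 * p 0 := by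
      have h3 : ∀ L ∈ Finset.range (n+1), (if L = 0 then (0:ℝ) else 2 * p L)
          = 2 * p L - (if L = 0 then 2 * p L else 0) := by
        intro L _
        by_cases h : L = 0 <;> simp [h]
      rw [Finset.sum_congr rfl h3, Finset.sum_sub_distrib, Finset.sum_ite_eq',
        ← Finset.mul_sum, hsum]
      simp [Finset.mem_range, Nat.succ_pos n]
    linarith
  have key : 1 - Q ≤ S := by nlinarith [sq_nonneg (1 - p 0), hQ0, h2T]
  have hdenpos : (0:ℝ) < (2*j+1)^2 - 1 := by nlinarith
  by_cases hq : 1 - Q ≤ 0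
  · have hu1 : 1 - u ≤ 0 := by
      rw [hu, hd, sub_nonpos, le_div_iff₀ hdenpos]
      nlinarith
    have hneg : Real.sqrt 2 * Real.sqrt j / (2*j+1)^2 * (1-u) ≤ 0 :=
      mul_nonpos_of_nonneg_of_nonpos (by positivity) hu1
    have := Real.sqrt_nonneg Δ
    linarith
  · push_neg at hq
    have hu' : 1 - u = (2*j+1)^2 * (1 - Q) / (4*j*(j+1)) := by
      rw [hu, hd]
      have h1 : (2*j+1)^2 - 1 ≠ 0 := ne_of_gt hdenpos
      have h2 : 4*j*(j+1) ≠ 0 := by positivity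
      field_simp
      ring
    have hu0 : 0 ≤ 1 - u := by
      rw [hu']
      apply div_nonneg
      · nlinarith
      · positivity
    have hc : 0 ≤ Real.sqrt 2 * Real.sqrt j / (2*j+1)^2 * (1-u) :=
      mul_nonneg (by positivity) hu0
    have hcsq : (Real.sqrt 2 * Real.sqrt j / (2*j+1)^2 * (1-u))^2
        = (1-Q)^2 / (8*j*(j+1)^2) := by
      rw [hu', mul_pow, div_pow, mul_pow, Real.sq_sqrt (by norm_num : (0:ℝ) ≤ 2),
        Real.sq_sqrt hj0.le]
      have h2 : (4*j*(j+1)) ≠ 0 := by positivity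
      have h3 : ((2*j+1)^2)^2 ≠ 0 := by positivity
      field_simp
      ring
    have hfinal : (Real.sqrt 2 * Real.sqrt j / (2*j+1)^2 * (1-u))^2 ≤ Δ := by
      rw [hcsq, hΔ]
      rw [div_le_div_iff₀ (by positivity) (by positivity)]
      have hsq : (1-Q)^2 ≤ S^2 := pow_le_pow_left₀ hq.le key 2
      exact mul_le_mul_of_nonneg_right hsq (by positivity)
    calc Real.sqrt 2 * Real.sqrt j / (2*j+1)^2 * (1-u)
        = Real.sqrt ((Real.sqrt 2 * Real.sqrt j / (2*j+1)^2 * (1-u))^2) :=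
          (Real.sqrt_sq hc).symm
      _ ≤ Real.sqrt Δ := Real.sqrt_le_sqrt hfinal
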